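/- Let k be a field, A = k[ε]/(ε²) the dual numbers over k, and R = A ⊗_k A. Set u = 1 ⊗ ε − ε ⊗ 1 and v = 1 ⊗ ε + ε ⊗ 1 in R. Then the 2-periodic complex of free R-modules ⋯ → R →(·u) R →(·v) R →(·u) R → A, with augmentation the multiplication map μ : A ⊗_k A → A, is exact: (i) the kernel of μ equals the ideal uR (the image of multiplication by u); (ii) the kernel of multiplication by u on R equals the image of multiplication by v; (iii) the kernel of multiplication by v on R equals the image of multiplication by u. In particular this gives a free resolution of A as an A ⊗_k A-module. -/

import Mathlib

open scoped TensorProduct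
open DualNumber

variable {k : Type} [Field k]

noncomputable def dnBasis (k : Type) [Field k] : Module.Basis (Fin 2) k (DualNumber k) :=
  Module.Basis.ofEquivFun
  { toFun := fun x => ![x.fst, x.snd]
    map_add' := by intro x y; funext i; fin_cases i <;> simp
    map_smul' := by intro c x; funext i; fin_cases i <;> simp
    invFun := fun f => TrivSqZeroExt.inl (f 0) + f 1 • ε
    left_inv := by intro x; ext <;> simp
    right_inv := by intro f; funext i; fin_cases i <;> simp }

theorem dnBasis_zero : dnBasis k 0 = 1 := by simp [dnBasis]
theorem dnBasis_one : dnBasis k 1 = ε := by simp [dnBasis]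
theorem dnBasis_repr (x : DualNumber k) (i : Fin 2) :
    (dnBasis k).repr x i = ![x.fst, x.snd] i := by simp [dnBasis]

noncomputable def dnB (k : Type) [Field k] :
    Module.Basis (Fin 2 × Fin 2) k (DualNumber k ⊗[k] DualNumber k) :=
  Module.Basis.tensorProduct (dnBasis k) (dnBasis k)

theorem dnB_repr_tmul (x y : DualNumber k) (i j : Fin 2) :
    (dnB k).repr (x ⊗ₜ y) (i, j) = ![x.fst, x.snd] i * ![y.fst, y.snd] j := by
  rw [dnB, Module.Basis.tensorProduct_repr_tmul_apply, dnBasis_repr, dnBasis_repr, smul_eq_mul, mul_comm]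

theorem dnB_apply (i j : Fin 2) : dnB k (i, j) = dnBasis k i ⊗ₜ[k] dnBasis k j :=
  Module.Basis.tensorProduct_apply _ _ _ _

theorem dn_rep (z : DualNumber k ⊗[k] DualNumber k) :
    z = (dnB k).repr z (0,0) • (1 ⊗ₜ[k] 1) + (dnB k).repr z (0,1) • (1 ⊗ₜ[k] ε)
      + (dnB k).repr z (1,0) • (ε ⊗ₜ[k] 1) + (dnB k).repr z (1,1) • (ε ⊗ₜ[k] ε) := by
  have h := (dnB k).sum_repr z
  rw [Fintype.sum_prod_type] at h
  simp only [Fin.sum_univ_two, dnB_apply, dnBasis_zero, dnBasis_one] at h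
  linear_combination (norm := module) h.symm

theorem dn_coeffs_zero {a b c d : k}
    (h : a • ((1:DualNumber k) ⊗ₜ[k] (1:DualNumber k)) + b • (1 ⊗ₜ[k] ε)
      + c • (ε ⊗ₜ[k] 1) + d • (ε ⊗ₜ[k] ε) = 0) :
    a = 0 ∧ b = 0 ∧ c = 0 ∧ d = 0 := by
  have H : ∀ i j : Fin 2, (dnB k).repr
      (a • ((1:DualNumber k) ⊗ₜ[k] (1:DualNumber k)) + b • (1 ⊗ₜ[k] ε)
        + c • (ε ⊗ₜ[k] 1) + d • (ε ⊗ₜ[k] ε)) (i, j) = 0 := by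
    intro i j; rw [h, LinearEquiv.map_zero, Finsupp.zero_apply]
  simp only [LinearEquiv.map_add, LinearEquiv.map_smul, Finsupp.add_apply, Finsupp.smul_apply, dnB_repr_tmul,
    TrivSqZeroExt.fst_one, TrivSqZeroExt.snd_one, fst_eps, snd_eps] at H
  refine ⟨?_, ?_, ?_, ?_⟩
  · have := H 0 0; simpa using this
  · have := H 0 1; simpa using this
  · have := H 1 0; simpa using this
  · have := H 1 1; simpa using this

abbrev dnTensorCommRing (k : Type) [Field k] : CommRing (DualNumber k ⊗[k] DualNumber k) :=
  Algebra.TensorProduct.instCommRing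

section
attribute [local instance] dnTensorCommRing

theorem hUV' : ((1:DualNumber k) ⊗ₜ[k] ε - ε ⊗ₜ[k] (1:DualNumber k)) * ((1:DualNumber k) ⊗ₜ[k] ε + ε ⊗ₜ[k] (1:DualNumber k)) = 0 := by
  simp only [sub_mul, mul_add, Algebra.TensorProduct.tmul_mul_tmul, one_mul, mul_one,
    eps_mul_eps, TensorProduct.zero_tmul, TensorProduct.tmul_zero]
  abel

theorem hVU' : ((1:DualNumber k) ⊗ₜ[k] ε + ε ⊗ₜ[k] (1:DualNumber k)) * ((1:DualNumber k) ⊗ₜ[k] ε - ε ⊗ₜ[k] (1:DualNumber k)) = 0 := by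
  simp only [add_mul, mul_sub, Algebra.TensorProduct.tmul_mul_tmul, one_mul, mul_one,
    eps_mul_eps, TensorProduct.zero_tmul, TensorProduct.tmul_zero]
  abel

theorem mulU_rep (a b c d : k) :
    ((1:DualNumber k) ⊗ₜ[k] ε - ε ⊗ₜ[k] 1) *
      (a • ((1:DualNumber k) ⊗ₜ[k] (1:DualNumber k)) + b • (1 ⊗ₜ[k] ε) + c • (ε ⊗ₜ[k] 1)
        + d • (ε ⊗ₜ[k] ε))
    = (0:k) • ((1:DualNumber k) ⊗ₜ[k] (1:DualNumber k)) + a • (1 ⊗ₜ[k] ε)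
        + (-a) • (ε ⊗ₜ[k] 1) + (c - b) • (ε ⊗ₜ[k] ε) := by
  simp only [mul_add, mul_smul_comm, sub_mul, Algebra.TensorProduct.tmul_mul_tmul, one_mul,
    mul_one, eps_mul_eps, TensorProduct.zero_tmul, TensorProduct.tmul_zero]
  module

theorem mulV_rep (a b c d : k) :
    ((1:DualNumber k) ⊗ₜ[k] ε + ε ⊗ₜ[k] 1) *
      (a • ((1:DualNumber k) ⊗ₜ[k] (1:DualNumber k)) + b • (1 ⊗ₜ[k] ε) + c • (ε ⊗ₜ[k] 1)
        + d • (ε ⊗ₜ[k] ε))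
    = (0:k) • ((1:DualNumber k) ⊗ₜ[k] (1:DualNumber k)) + a • (1 ⊗ₜ[k] ε)
        + a • (ε ⊗ₜ[k] 1) + (b + c) • (ε ⊗ₜ[k] ε) := by
  simp only [mul_add, mul_smul_comm, add_mul, Algebra.TensorProduct.tmul_mul_tmul, one_mul,
    mul_one, eps_mul_eps, TensorProduct.zero_tmul, TensorProduct.tmul_zero]
  module

theorem mu_rep (a b c d : k) :
    LinearMap.mul' k (DualNumber k)
      (a • ((1:DualNumber k) ⊗ₜ[k] (1:DualNumber k)) + b • (1 ⊗ₜ[k] ε) + c • (ε ⊗ₜ[k] 1)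
        + d • (ε ⊗ₜ[k] ε))
    = a • (1:DualNumber k) + (b + c) • ε := by
  simp only [map_add, map_smul, LinearMap.mul'_apply, one_mul, mul_one, eps_mul_eps]
  module

set_option maxHeartbeats 2000000 in
end

/-- Let `A = k[ε]/(ε²)` be the dual numbers over a field `k`, `R = A ⊗_k A`,
`u = 1 ⊗ ε - ε ⊗ 1` and `v = 1 ⊗ ε + ε ⊗ 1`.  Then the 2-periodic complex
`⋯ → R →(·u) R →(·v) R →(·u) R →(μ) A` is exact:
(i) `ker μ = im (·u)`, (ii) `ker (·u) = im (·v)`, (iii) `ker (·v) = im (·u)`;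
in particular it is a free resolution of `A` as an `A ⊗_k A`-module. -/
theorem dualNumber_periodic_resolution_exact (k : Type) [Field k] :
    ∀ u v : DualNumber k ⊗[k] DualNumber k,
      u = 1 ⊗ₜ[k] (ε : DualNumber k) - (ε : DualNumber k) ⊗ₜ[k] 1 →
      v = 1 ⊗ₜ[k] (ε : DualNumber k) + (ε : DualNumber k) ⊗ₜ[k] 1 →
      LinearMap.ker (LinearMap.mul' k (DualNumber k)) =
          LinearMap.range (LinearMap.mulLeft k u) ∧
      LinearMap.ker (LinearMap.mulLeft k u) =
          LinearMap.range (LinearMap.mulLeft k v) ∧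
      LinearMap.ker (LinearMap.mulLeft k v) =
          LinearMap.range (LinearMap.mulLeft k u) := by
  intro u v hu hv
  subst hu; subst hv
  have hmul : ∀ x y : DualNumber k ⊗[k] DualNumber k,
      LinearMap.mul' k (DualNumber k) (x * y)
        = LinearMap.mul' k (DualNumber k) x * LinearMap.mul' k (DualNumber k) y := by
    intro x y
    rw [← Algebra.TensorProduct.lmul'_toLinearMap (R := k) (S := DualNumber k),
      AlgHom.toLinearMap_apply, AlgHom.toLinearMap_apply, AlgHom.toLinearMap_apply]
    exact map_mul _ _ _
  refine ⟨?_, ?_, ?_⟩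
  · -- (i) ker μ = range (·u)
    apply le_antisymm
    · intro z hz
      rw [LinearMap.mem_ker] at hz
      obtain ⟨a, b, c, d, h⟩ : ∃ a b c d : k, z
          = a • ((1:DualNumber k) ⊗ₜ[k] (1:DualNumber k)) + b • (1 ⊗ₜ[k] ε)
            + c • (ε ⊗ₜ[k] 1) + d • (ε ⊗ₜ[k] ε) := ⟨_, _, _, _, dn_rep z⟩
      subst h
      rw [mu_rep] at hz
      have ha : a = 0 := by
        have := congrArg TrivSqZeroExt.fst hz
        simpa using this
      have hc : c = -b := by
        have := congrArg TrivSqZeroExt.snd hz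
        simp at this
        linear_combination this
      refine ⟨b • ((1:DualNumber k) ⊗ₜ[k] (1:DualNumber k)) + (0:k) • (1 ⊗ₜ[k] ε)
        + d • (ε ⊗ₜ[k] 1) + (0:k) • (ε ⊗ₜ[k] ε), ?_⟩
      rw [LinearMap.mulLeft_apply, mulU_rep, ha, hc]
      module
    · rintro _ ⟨y, rfl⟩
      rw [LinearMap.mem_ker, LinearMap.mulLeft_apply, hmul]
      have : LinearMap.mul' k (DualNumber k) ((1:DualNumber k) ⊗ₜ[k] ε - ε ⊗ₜ[k] 1) = 0 := by
        simp [map_sub]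
      rw [this, zero_mul]
  · -- (ii) ker (·u) = range (·v)
    apply le_antisymm
    · intro z hz
      rw [LinearMap.mem_ker, LinearMap.mulLeft_apply] at hz
      obtain ⟨a, b, c, d, h⟩ : ∃ a b c d : k, z
          = a • ((1:DualNumber k) ⊗ₜ[k] (1:DualNumber k)) + b • (1 ⊗ₜ[k] ε)
            + c • (ε ⊗ₜ[k] 1) + d • (ε ⊗ₜ[k] ε) := ⟨_, _, _, _, dn_rep z⟩
      subst h
      rw [mulU_rep] at hz
      obtain ⟨-, ha, -, hcb⟩ := dn_coeffs_zero hz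
      have hc : c = b := by linear_combination hcb
      refine ⟨b • ((1:DualNumber k) ⊗ₜ[k] (1:DualNumber k)) + (0:k) • (1 ⊗ₜ[k] ε)
        + d • (ε ⊗ₜ[k] 1) + (0:k) • (ε ⊗ₜ[k] ε), ?_⟩
      rw [LinearMap.mulLeft_apply, mulV_rep, ha, hc]
      module
    · rintro _ ⟨y, rfl⟩
      simp only [LinearMap.mem_ker, LinearMap.mulLeft_apply]
      rw [← @mul_assoc _ (dnTensorCommRing k).toSemigroup, hUV', @zero_mul _ (dnTensorCommRing k).toMulZeroClass]
  · -- (iii) ker (·v) = range (·u)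
    apply le_antisymm
    · intro z hz
      rw [LinearMap.mem_ker, LinearMap.mulLeft_apply] at hz
      obtain ⟨a, b, c, d, h⟩ : ∃ a b c d : k, z
          = a • ((1:DualNumber k) ⊗ₜ[k] (1:DualNumber k)) + b • (1 ⊗ₜ[k] ε)
            + c • (ε ⊗ₜ[k] 1) + d • (ε ⊗ₜ[k] ε) := ⟨_, _, _, _, dn_rep z⟩
      subst h
      rw [mulV_rep] at hz
      obtain ⟨-, ha, -, hbc⟩ := dn_coeffs_zero hz
      have hc : c = -b := by linear_combination hbc
      refine ⟨b • ((1:DualNumber k) ⊗ₜ[k] (1:DualNumber k)) + (0:k) • (1 ⊗ₜ[k] ε)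
        + d • (ε ⊗ₜ[k] 1) + (0:k) • (ε ⊗ₜ[k] ε), ?_⟩
      rw [LinearMap.mulLeft_apply, mulU_rep, ha, hc]
      module
    · rintro _ ⟨y, rfl⟩
      simp only [LinearMap.mem_ker, LinearMap.mulLeft_apply]
      rw [← @mul_assoc _ (dnTensorCommRing k).toSemigroup, hVU', @zero_mul _ (dnTensorCommRing k).toMulZeroClass]
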